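/- The volume of the spherical diamond S_n(r) = {(x₁,...,x_{4n}) ∈ ℝ^{4n} : Σ_{t=0}^{n-1} √(x_{4t+1}² + x_{4t+2}² + x_{4t+3}² + x_{4t+4}²) < r} equals π^{2n} · 12^n · r^{4n} / (4n)!. -/

import Mathlib

open MeasureTheory Real Pointwise

namespace SphericalDiamond

noncomputable section

lemma idx_lt {n : ℕ} (t : Fin n) (i : Fin 4) : 4 * t.1 + i.1 < 4 * n := by omega

/-- The `t`-th block of `x` as a point of Euclidean `ℝ⁴`. -/
def blk {n : ℕ} (x : Fin (4 * n) → ℝ) (t : Fin n) : EuclideanSpace ℝ (Fin 4) :=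
  WithLp.toLp 2 (fun i : Fin 4 => x ⟨4 * t.1 + i.1, idx_lt t i⟩)

/-- The `ℓ¹`-sum of the Euclidean norms of the blocks. -/
def g (n : ℕ) (x : Fin (4 * n) → ℝ) : ℝ := ∑ t : Fin n, ‖blk x t‖

lemma norm_blk {n : ℕ} (x : Fin (4 * n) → ℝ) (t : Fin n) :
    ‖blk x t‖ = Real.sqrt (∑ i : Fin 4, (x ⟨4 * t.1 + i.1, idx_lt t i⟩) ^ 2) := by
  rw [EuclideanSpace.norm_eq]
  congr 1
  refine Finset.sum_congr rfl fun i _ => ?_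
  rw [Real.norm_eq_abs, sq_abs]
  rfl

lemma blk_zero {n : ℕ} (t : Fin n) : blk (0 : Fin (4 * n) → ℝ) t = 0 := rfl

lemma blk_neg {n : ℕ} (x : Fin (4 * n) → ℝ) (t : Fin n) : blk (-x) t = -(blk x t) := rfl

lemma blk_add {n : ℕ} (x y : Fin (4 * n) → ℝ) (t : Fin n) :
    blk (x + y) t = blk x t + blk y t := rfl

lemma blk_smul {n : ℕ} (c : ℝ) (x : Fin (4 * n) → ℝ) (t : Fin n) :
    blk (c • x) t = c • blk x t := rfl

lemma g_zero (n : ℕ) : g n 0 = 0 := by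
  simp [g, blk_zero]

lemma g_neg (n : ℕ) (x : Fin (4 * n) → ℝ) : g n (-x) = g n x := by
  simp [g, blk_neg]

lemma g_add_le (n : ℕ) (x y : Fin (4 * n) → ℝ) : g n (x + y) ≤ g n x + g n y := by
  unfold g
  rw [← Finset.sum_add_distrib]
  exact Finset.sum_le_sum fun t _ => by rw [blk_add]; exact norm_add_le _ _

lemma g_smul (n : ℕ) (c : ℝ) (x : Fin (4 * n) → ℝ) : g n (c • x) = |c| * g n x := by
  simp [g, blk_smul, norm_smul, Finset.mul_sum]

lemma g_eq_zero {n : ℕ} {x : Fin (4 * n) → ℝ} (h : g n x = 0) : x = 0 := by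
  have hall := (Finset.sum_eq_zero_iff_of_nonneg (fun t _ => norm_nonneg _)).mp h
  funext k
  have hkn : k.1 / 4 < n := by omega
  have hb : blk x ⟨k.1 / 4, hkn⟩ = 0 :=
    norm_eq_zero.mp (hall ⟨k.1 / 4, hkn⟩ (Finset.mem_univ _))
  have hk4 : k.1 % 4 < 4 := by omega
  have hx : x k = blk x ⟨k.1 / 4, hkn⟩ ⟨k.1 % 4, hk4⟩ := by
    show x k = x ⟨4 * (k.1 / 4) + k.1 % 4, _⟩
    congr 1
    exact Fin.ext (by simp; omega)
  rw [hx, hb]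
  rfl

lemma integral_exp_neg_norm_euclidean :
    ∫ y : EuclideanSpace ℝ (Fin 4), Real.exp (-‖y‖) = 12 * π ^ 2 := by
  have h1 := MeasureTheory.measure_unitBall_eq_integral_div_gamma
    (volume : Measure (EuclideanSpace ℝ (Fin 4))) (p := 1) one_pos
  have h2 := EuclideanSpace.volume_ball (Fin 4) 0 1
  simp only [Real.rpow_one, finrank_euclideanSpace, Fintype.card_fin, Nat.cast_ofNat,
    div_one, ENNReal.ofReal_one, one_pow, one_mul] at h1 h2
  have hI : (0 : ℝ) ≤ ∫ y : EuclideanSpace ℝ (Fin 4), Real.exp (-‖y‖) :=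
    integral_nonneg fun y => (Real.exp_pos _).le
  have hg5 : Real.Gamma ((4 : ℝ) + 1) = 24 := by
    rw [show ((4 : ℝ) + 1) = ((4 : ℕ) : ℝ) + 1 by norm_num, Real.Gamma_nat_eq_factorial]
    norm_num [Nat.factorial]
  have hg3 : Real.Gamma ((4 : ℝ) / 2 + 1) = 2 := by
    rw [show ((4 : ℝ) / 2 + 1) = ((2 : ℕ) : ℝ) + 1 by norm_num, Real.Gamma_nat_eq_factorial]
    norm_num [Nat.factorial]
  rw [h2, hg3] at h1
  rw [hg5] at h1
  have hs : Real.sqrt π ^ 4 / 2 = π ^ 2 / 2 := by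
    rw [show Real.sqrt π ^ 4 = (Real.sqrt π ^ 2) ^ 2 by ring, Real.sq_sqrt pi_pos.le]
  rw [hs] at h1
  have := (ENNReal.ofReal_eq_ofReal_iff (by positivity) (by positivity)).mp h1
  nlinarith [this]

lemma integral_exp_neg_norm_pi4 :
    ∫ y : Fin 4 → ℝ, Real.exp (-Real.sqrt (∑ i : Fin 4, (y i) ^ 2)) = 12 * π ^ 2 := by
  rw [← (EuclideanSpace.volume_preserving_symm_measurableEquiv_toLp (Fin 4)).integral_comp']
  have : ∀ z : EuclideanSpace ℝ (Fin 4),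
      Real.sqrt (∑ i : Fin 4, ((MeasurableEquiv.toLp 2 (Fin 4 → ℝ)).symm z i) ^ 2) = ‖z‖ := by
    intro z
    rw [EuclideanSpace.norm_eq]
    congr 1
    refine Finset.sum_congr rfl fun i _ => ?_
    rw [Real.norm_eq_abs, sq_abs]
    rfl
  simp_rw [this]
  exact integral_exp_neg_norm_euclidean

lemma key_integral (n : ℕ) :
    ∫ x : Fin (4 * n) → ℝ, Real.exp (-(g n x)) = (12 * π ^ 2) ^ n := by
  induction n with
  | zero =>
      simp only [g, Finset.univ_eq_empty, Finset.sum_empty, neg_zero, Real.exp_zero, pow_zero]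
      rw [integral_const]
      simp [MeasureTheory.volume_pi, MeasureTheory.Measure.pi_empty_univ]
      simp [Measure.real, Measure.pi_univ]
  | succ n ih =>
      set e : Fin 4 ⊕ Fin (4 * n) ≃ Fin (4 * (n + 1)) :=
        finSumFinEquiv.trans (finCongr (by omega)) with he
      set φ : ((Fin 4 → ℝ) × (Fin (4 * n) → ℝ)) ≃ᵐ (Fin (4 * (n + 1)) → ℝ) :=
        (MeasurableEquiv.sumPiEquivProdPi (fun _ => ℝ)).symm.trans
          (MeasurableEquiv.piCongrLeft (fun _ => ℝ) e) with hφdef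
      have hφ : MeasurePreserving φ :=
        (volume_measurePreserving_piCongrLeft (fun _ => ℝ) e).comp
          (volume_measurePreserving_sumPiEquivProdPi_symm (fun _ => ℝ))
      rw [← hφ.integral_comp']
      have hinl : ∀ (a : Fin 4 → ℝ) (b : Fin (4 * n) → ℝ) (i : Fin 4),
          φ (a, b) (e (Sum.inl i)) = a i := by
        intro a b i
        simp only [hφdef, MeasurableEquiv.trans_apply, MeasurableEquiv.coe_piCongrLeft,
          MeasurableEquiv.coe_sumPiEquivProdPi_symm]
        exact Equiv.piCongrLeft_sumInl (fun _ => ℝ) e a b i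
      have hinr : ∀ (a : Fin 4 → ℝ) (b : Fin (4 * n) → ℝ) (j : Fin (4 * n)),
          φ (a, b) (e (Sum.inr j)) = b j := by
        intro a b j
        simp only [hφdef, MeasurableEquiv.trans_apply, MeasurableEquiv.coe_piCongrLeft,
          MeasurableEquiv.coe_sumPiEquivProdPi_symm]
        exact Equiv.piCongrLeft_sumInr (fun _ => ℝ) e a b j
      have hval : ∀ p : (Fin 4 → ℝ) × (Fin (4 * n) → ℝ),
          g (n + 1) (φ p) = Real.sqrt (∑ i : Fin 4, (p.1 i) ^ 2) + g n p.2 := by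
        rintro ⟨a, b⟩
        show (∑ t : Fin (n + 1), ‖blk (φ (a, b)) t‖) = _
        rw [Fin.sum_univ_succ]
        congr 1
        · rw [norm_blk]
          refine congrArg Real.sqrt ?_
          refine Finset.sum_congr rfl fun i _ => ?_
          have hidx : (⟨4 * (0 : Fin (n + 1)).1 + i.1, by omega⟩ : Fin (4 * (n + 1))) =
              e (Sum.inl i) := by
            refine Fin.ext ?_
            simp [he]
          rw [hidx, hinl]
        · show (∑ s : Fin n, ‖blk (φ (a, b)) s.succ‖) = g n b
          rw [g]
          refine Finset.sum_congr rfl fun s _ => ?_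
          rw [norm_blk, norm_blk]
          refine congrArg Real.sqrt ?_
          refine Finset.sum_congr rfl fun i _ => ?_
          have hidx : (⟨4 * (s.succ : Fin (n + 1)).1 + i.1, by omega⟩ : Fin (4 * (n + 1))) =
              e (Sum.inr ⟨4 * s.1 + i.1, by omega⟩) := by
            refine Fin.ext ?_
            simp [he, Fin.val_succ]
            try omega
          rw [hidx, hinr]
      simp_rw [hval, neg_add, Real.exp_add]
      rw [MeasureTheory.Measure.volume_eq_prod,
        MeasureTheory.integral_prod_mul (f := fun a : Fin 4 → ℝ => rexp (-Real.sqrt (∑ i : Fin 4, a i ^ 2)))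
          (g := fun b : Fin (4 * n) → ℝ => rexp (-g n b)),
        integral_exp_neg_norm_pi4, ih]
      ring

end

end SphericalDiamond

open SphericalDiamond

/-- The volume of the spherical diamond
`S_n(r) = {x ∈ ℝ^{4n} : Σ_{t=0}^{n-1} √(x_{4t+1}² + ... + x_{4t+4}²) < r}`
equals `π^{2n} · 12^n · r^{4n} / (4n)!`. -/
theorem volume_spherical_diamond
    (n : ℕ) (hn : 0 < n) (r : ℝ) (hr : 0 < r) :
    volume {x : Fin (4 * n) → ℝ |
        ∑ t : Fin n, Real.sqrt (∑ i : Fin 4,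
          (x ⟨4 * t.val + i.val, by omega⟩) ^ 2) < r} =
      ENNReal.ofReal (π ^ (2 * n) * 12 ^ n * r ^ (4 * n) / (Nat.factorial (4 * n))) := by
  have hset0 : {x : Fin (4 * n) → ℝ |
      ∑ t : Fin n, Real.sqrt (∑ i : Fin 4,
        (x ⟨4 * t.val + i.val, by omega⟩) ^ 2) < r} = {x | g n x < r} := by
    ext x
    simp only [Set.mem_setOf_eq, g, norm_blk]
  rw [hset0]
  have h1 := MeasureTheory.measure_lt_one_eq_integral_div_gamma
    (volume : Measure (Fin (4 * n) → ℝ)) (g := g n) (g_zero n) (g_neg n) (g_add_le n)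
    (fun hx => g_eq_zero hx) (fun c x => le_of_eq (g_smul n c x)) (p := 1) one_pos
  simp only [Real.rpow_one, div_one, Module.finrank_fintype_fun_eq_card, Fintype.card_fin] at h1
  rw [key_integral n] at h1
  have hGamma : Real.Gamma ((4 * n : ℕ) + 1) = (Nat.factorial (4 * n)) := by
    rw [Real.Gamma_nat_eq_factorial]
  rw [hGamma] at h1
  have hset : {x : Fin (4 * n) → ℝ | g n x < r} = r • {x | g n x < 1} := by
    ext x
    rw [Set.mem_smul_set_iff_inv_smul_mem₀ hr.ne']
    simp only [Set.mem_setOf_eq]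
    rw [g_smul, abs_inv, abs_of_pos hr, inv_mul_lt_iff₀ hr, mul_one]
  rw [hset, MeasureTheory.Measure.addHaar_smul_of_nonneg volume hr.le, h1]
  rw [Module.finrank_fintype_fun_eq_card, Fintype.card_fin]
  rw [← ENNReal.ofReal_mul (by positivity)]
  congr 1
  rw [mul_pow, ← pow_mul]
  field_simp
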